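/- Let G be a group, i an involution in G, and N a normal subgroup of G contained in the center of [i,G] and such that i inverts every element of N. Let H be a subgroup of [i,G] containing N such that [H,[i,G]] ⊆ N and such that i inverts H modulo N, i.e., (i·h·i)·h ∈ N for every h ∈ H. Then for every h ∈ H, the element h² commutes with every element of the set i·i^G = {i·(g⁻¹·i·g) : g ∈ G}. -/
import Mathlib


/-- The subgroup `[i, G]` generated by all commutators `i⁻¹ * g⁻¹ * i * g`. -/
def commutatorWith {G : Type*} [Group G] (i : G) : Subgroup G :=
  Subgroup.closure {y : G | ∃ g : G, i⁻¹ * g⁻¹ * i * g = y}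

/-- Let `i` be an involution of `G`, `N` a normal subgroup contained in the center of
`[i, G]` and inverted by `i`, and `H` a subgroup of `[i, G]` containing `N` with
`[H, [i, G]] ≤ N` and such that `i` inverts `H` modulo `N`. Then for every `h ∈ H`, the
element `h ^ 2` commutes with every element of the set `i * i^G`. -/
theorem sq_commutes_with_ii_conj {G : Type*} [Group G] (i : G)
    (hi1 : i ≠ 1) (hi2 : i ^ 2 = 1) (N H : Subgroup G) [N.Normal]
    (hNsub : N ≤ commutatorWith i)
    (hNcent : ∀ x ∈ N, ∀ y ∈ commutatorWith i, Commute x y)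
    (hNinv : ∀ x ∈ N, i * x * i⁻¹ = x⁻¹)
    (hNH : N ≤ H) (hHsub : H ≤ commutatorWith i)
    (hHcomm : ⁅H, commutatorWith i⁆ ≤ N)
    (hinv : ∀ h ∈ H, i * h * i⁻¹ * h ∈ N) :
    ∀ h ∈ H, ∀ g : G, Commute (h ^ 2) (i * (g⁻¹ * i * g)) := by
  intro h hh g
  have hii : i * i = 1 := by rw [← pow_two]; exact hi2
  have hiinv : i⁻¹ = i := by rw [inv_eq_iff_mul_eq_one]; exact hii
  set c : G := i * (g⁻¹ * i * g) with hc_def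
  -- c is in [i, G]
  have hcK : c ∈ commutatorWith i := by
    apply Subgroup.subset_closure
    exact ⟨g, by rw [hc_def, hiinv]; group⟩
  have hhK : h ∈ commutatorWith i := hHsub hh
  -- i inverts c
  have hci : i * c * i⁻¹ = c⁻¹ := by
    rw [hc_def, hiinv]
    calc i * (i * (g⁻¹ * i * g)) * i = (i * i) * (g⁻¹ * i * g * i) := by group
      _ = g⁻¹ * i * g * i := by rw [hii]; group
      _ = (i * (g⁻¹ * i * g))⁻¹ := by
          rw [mul_inv_rev, mul_inv_rev, mul_inv_rev, hiinv, inv_inv]; group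
  -- the commutator n = [h, c] lies in N
  set n : G := h * c * h⁻¹ * c⁻¹ with hn_def
  have hnN : n ∈ N := by
    rw [hn_def, ← commutatorElement_def]
    exact hHcomm (Subgroup.commutator_mem_commutator hh hcK)
  -- m = i*h*i⁻¹*h ∈ N
  set m : G := i * h * i⁻¹ * h with hm_def
  have hmN : m ∈ N := hinv h hh
  clear_value c n m
  have cn_h : Commute n h := hNcent n hnN h hhK
  have cn_c : Commute n c := hNcent n hnN c hcK
  have cm_h : Commute m h := hNcent m hmN h hhK
  have cm_c : Commute m c := hNcent m hmN c hcK
  have hmi : i * h * i⁻¹ = m * h⁻¹ := by rw [hm_def]; group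
  have hmi' : i * h⁻¹ * i⁻¹ = h * m⁻¹ := by
    calc i * h⁻¹ * i⁻¹ = (i * h * i⁻¹)⁻¹ := by group
      _ = (m * h⁻¹)⁻¹ := by rw [hmi]
      _ = h * m⁻¹ := by group
  have hci' : i * c⁻¹ * i⁻¹ = c := by
    calc i * c⁻¹ * i⁻¹ = (i * c * i⁻¹)⁻¹ := by group
      _ = c⁻¹⁻¹ := by rw [hci]
      _ = c := inv_inv c
  -- h * c = n * (c * h)
  have hhc : h * c = n * (c * h) := by rw [hn_def]; group
  -- key: n is its own inverse
  have key : n⁻¹ = n := by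
    have e1 : i * n * i⁻¹ = n⁻¹ := hNinv n hnN
    have cmX : Commute m (h⁻¹ * c⁻¹ * h) :=
      (cm_h.inv_right.mul_right cm_c.inv_right).mul_right cm_h
    have cnX : Commute n (h⁻¹ * c⁻¹) := cn_h.inv_right.mul_right cn_c.inv_right
    have e2 : i * n * i⁻¹ = n := by
      calc i * n * i⁻¹
          = (i * h * i⁻¹) * (i * c * i⁻¹) * (i * h⁻¹ * i⁻¹) * (i * c⁻¹ * i⁻¹) := by
            rw [hn_def]; group
        _ = (m * h⁻¹) * c⁻¹ * (h * m⁻¹) * c := by rw [hmi, hci, hmi', hci']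
        _ = m * (h⁻¹ * c⁻¹ * h) * m⁻¹ * c := by group
        _ = (h⁻¹ * c⁻¹ * h) * c := by rw [cmX.eq]; group
        _ = h⁻¹ * c⁻¹ * (h * c) := by group
        _ = h⁻¹ * c⁻¹ * (n * (c * h)) := by rw [hhc]
        _ = (h⁻¹ * c⁻¹) * n * (c * h) := by group
        _ = n * (h⁻¹ * c⁻¹) * (c * h) := by rw [← cnX.eq]
        _ = n := by group
    rw [← e1, e2]
  have hnn : n * n = 1 := by nth_rewrite 1 [← key]; exact inv_mul_cancel n
  -- conclude
  have final : h ^ 2 * c = c * h ^ 2 := by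
    rw [pow_two]
    calc h * h * c = h * (h * c) := by group
      _ = h * (n * (c * h)) := by rw [hhc]
      _ = (h * n) * (c * h) := by group
      _ = (n * h) * (c * h) := by rw [← cn_h.eq]
      _ = n * ((h * c) * h) := by group
      _ = n * ((n * (c * h)) * h) := by rw [hhc]
      _ = (n * n) * (c * (h * h)) := by group
      _ = c * (h * h) := by rw [hnn]; group
  exact final
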